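/- Let f : X → Y be a continuous map of topological spaces, let r ≥ 2, and let U ⊆ X^r. The following are equivalent: (1) there exists a sequential f-motion planner on U; (2) the r maps U → Y given by (x_0, …, x_{r-1}) ↦ f(x_j), for j = 0, …, r-1, are all pairwise homotopic; (3) the restriction of f^r = f × ⋯ × f to U can be deformed into the diagonal ΔY of Y^r, i.e. there is a homotopy H : U × [0,1] → Y^r with H(x̄, 0) = f^r(x̄) and H(x̄, 1) ∈ ΔY for all x̄ ∈ U. -/
import Mathlib



/-- The time `j / (r - 1)` in the unit interval, for `j : Fin r` and `2 ≤ r`. -/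
noncomputable def seqTime {r : ℕ} (hr : 2 ≤ r) (j : Fin r) : unitInterval :=
  ⟨((j : ℕ) : ℝ) / ((r : ℝ) - 1), by
    have h2 : (2 : ℝ) ≤ (r : ℝ) := by exact_mod_cast hr
    have hj : ((j : ℕ) : ℝ) + 1 ≤ (r : ℝ) := by exact_mod_cast j.isLt
    constructor
    · exact div_nonneg (Nat.cast_nonneg _) (by linarith)
    · rw [div_le_one (by linarith)]; linarith⟩

/-- The `j`-th coordinate map `U → Y`, `x̄ ↦ f (x̄ j)`, of `f^r` on a subset `U ⊆ X^r`. -/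
def coordMap {X Y : Type*} [TopologicalSpace X] [TopologicalSpace Y] (f : C(X, Y)) {r : ℕ}
    (U : Set (Fin r → X)) (j : Fin r) : C(U, Y) :=
  ⟨fun u => f (u.1 j), f.continuous.comp ((continuous_apply j).comp continuous_subtype_val)⟩

private lemma projIcc_one' : Set.projIcc (0:ℝ) 1 zero_le_one 1 = 1 :=
  Subtype.ext (by simp [Set.projIcc])

private lemma projIcc_zero' : Set.projIcc (0:ℝ) 1 zero_le_one 0 = 0 :=
  Subtype.ext (by simp [Set.projIcc])

open Set in
lemma planner_of_homotopic {X Y : Type*} [TopologicalSpace X] [TopologicalSpace Y] (f : C(X, Y))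
    {r : ℕ} (hr : 2 ≤ r) (U : Set (Fin r → X))
    (h : ∀ j j' : Fin r, ContinuousMap.Homotopic (coordMap f U j) (coordMap f U j')) :
    ∃ F : C(U, C(unitInterval, Y)),
      ∀ (u : U) (j : Fin r), F u (seqTime hr j) = f (u.1 j) := by
  set j0 : Fin r := ⟨0, by omega⟩ with hj0def
  have hh : ∀ j : Fin r, ContinuousMap.Homotopy (coordMap f U j) (coordMap f U j0) :=
    fun j => (h j j0).some
  set N : ℕ := r - 1 with hNdef
  have hNlt : N < r := by omega
  have hNR : ((N : ℕ) : ℝ) = (r : ℝ) - 1 := by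
    rw [hNdef, Nat.cast_sub (by omega)]; simp
  have hN1 : (1 : ℝ) ≤ (N : ℝ) := by
    have : (2:ℝ) ≤ (r:ℝ) := by exact_mod_cast hr
    rw [hNR]; linarith
  have hidx : ∀ x : ℝ, min (round x).toNat N < r := fun x =>
    lt_of_le_of_lt (min_le_right _ _) hNlt
  set idx : ℝ → Fin r := fun x => ⟨min (round x).toNat N, hidx x⟩ with hidxdef
  set θ : ℝ → unitInterval := fun x => projIcc 0 1 zero_le_one (2 * |x - round x|) with hθdef
  set G : U × unitInterval → Y :=
    fun p => hh (idx ((p.2 : ℝ) * N)) (θ ((p.2 : ℝ) * N), p.1) with hGdef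
  set A : Fin r → Set (U × unitInterval) := fun j =>
    {p | ((j : ℕ) : ℝ) - 1/2 ≤ (p.2 : ℝ) * N ∧ (p.2 : ℝ) * N ≤ ((j : ℕ) : ℝ) + 1/2} with hAdef
  have hscont : Continuous fun p : U × unitInterval => (p.2 : ℝ) * N :=
    (continuous_subtype_val.comp continuous_snd).mul continuous_const
  have hxrange : ∀ p : U × unitInterval, 0 ≤ (p.2 : ℝ) * N ∧ (p.2 : ℝ) * N ≤ N := by
    intro p
    have h0 := p.2.2.1
    have h1 := p.2.2.2
    constructor
    · positivity
    · nlinarith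
  have hround : ∀ x : ℝ, 0 ≤ x → x ≤ N → 0 ≤ round x ∧ round x ≤ (N : ℤ) := by
    intro x h0 h1
    rw [round_eq]
    constructor
    · exact Int.le_floor.2 (by push_cast; linarith)
    · have hf : ((⌊x + 1/2⌋ : ℤ) : ℝ) ≤ x + 1/2 := Int.floor_le _
      have : ((⌊x + 1/2⌋ : ℤ) : ℝ) < (N : ℝ) + 1 := by linarith
      exact_mod_cast Int.lt_add_one_iff.1 (by exact_mod_cast this)
  -- value of idx as a real number, when 0 ≤ round x ≤ N
  have hidxval : ∀ x : ℝ, 0 ≤ round x → round x ≤ (N : ℤ) →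
      (((idx x : Fin r) : ℕ) : ℝ) = ((round x : ℤ) : ℝ) := by
    intro x hr0 hr1
    have h2 : (round x).toNat ≤ N := by omega
    have h3 : (((idx x : Fin r) : ℕ) : ℤ) = round x := by
      simp [hidxdef, min_eq_left h2, Int.toNat_of_nonneg hr0]
    exact_mod_cast h3
  -- cover
  have hcover : ⋃ j, A j = univ := by
    apply eq_univ_of_forall
    intro p
    obtain ⟨h0, h1⟩ := hxrange p
    obtain ⟨hr0, hr1⟩ := hround _ h0 h1
    refine mem_iUnion.2 ⟨idx ((p.2 : ℝ) * N), ?_, ?_⟩ <;>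
    · have hco := hidxval _ hr0 hr1
      have habs := abs_sub_round ((p.2 : ℝ) * N)
      rw [abs_le] at habs
      rw [hco]
      linarith [habs.1, habs.2]
  have hclosed : ∀ j, IsClosed (A j) :=
    fun j => (isClosed_le continuous_const hscont).inter (isClosed_le hscont continuous_const)
  -- continuity on each piece
  have hcont : ∀ j, ContinuousOn G (A j) := by
    intro j
    set pf : U × unitInterval → Y :=
      fun p => hh j (projIcc 0 1 zero_le_one (2 * |(p.2 : ℝ) * N - ((j:ℕ):ℝ)|), p.1) with hpfdef
    have hpfcont : Continuous pf := by
      apply (hh j).continuous.comp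
      refine Continuous.prodMk ?_ continuous_fst
      exact continuous_projIcc.comp ((continuous_const.mul (hscont.sub continuous_const).abs))
    refine ContinuousOn.congr hpfcont.continuousOn ?_
    intro p hp
    obtain ⟨hp1, hp2⟩ := hp
    obtain ⟨hx0, hxN⟩ := hxrange p
    show (hh (idx ((p.2 : ℝ) * N))) (θ ((p.2 : ℝ) * N), p.1)
      = (hh j) (projIcc 0 1 zero_le_one (2 * |(p.2 : ℝ) * N - ((j:ℕ):ℝ)|), p.1)
    set x : ℝ := (p.2 : ℝ) * N with hxdef
    rcases lt_or_eq_of_le hp2 with hlt | heq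
    · -- round x = j
      have hrx : round x = ((j : ℕ) : ℤ) := by
        rw [round_eq]
        apply Int.floor_eq_iff.2
        constructor
        · push_cast; linarith
        · push_cast; linarith
      have hjN : (j : ℕ) ≤ N := by omega
      have hidxj : idx x = j := by
        apply Fin.ext
        simp [hidxdef, hrx, min_eq_left hjN]
      have hθeq : θ x = projIcc 0 1 zero_le_one (2 * |x - ((j:ℕ):ℝ)|) := by
        show projIcc 0 1 zero_le_one (2 * |x - ((round x : ℤ) : ℝ)|) = _
        rw [hrx]; push_cast; rfl
      rw [hidxj, hθeq]
    · -- x = j + 1/2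
      have hrx : round x = ((j : ℕ) : ℤ) + 1 := by
        rw [round_eq, heq]
        have h5 : ((j:ℕ):ℝ) + 1/2 + 1/2 = ((((j:ℕ):ℤ) + 1 : ℤ) : ℝ) := by push_cast; ring
        rw [h5, Int.floor_intCast]
      have hj1N : (j : ℕ) + 1 ≤ N := by
        have h6 : ((j:ℕ):ℝ) + 1/2 ≤ (N:ℝ) := by rw [← heq]; exact hxN
        have h7 : ((j:ℕ):ℝ) < (N:ℝ) := by linarith
        exact_mod_cast Nat.add_one_le_iff.2 (by exact_mod_cast h7)
      have hidxj : idx x = ⟨(j : ℕ) + 1, by omega⟩ := by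
        apply Fin.ext
        simp [hidxdef, hrx, min_eq_left hj1N]
      have hθx : θ x = 1 := by
        show projIcc 0 1 zero_le_one (2 * |x - ((round x : ℤ) : ℝ)|) = 1
        rw [hrx, heq]
        rw [show (2 : ℝ) * |((j:ℕ):ℝ) + 1/2 - ((((j:ℕ):ℤ) + 1 : ℤ) : ℝ)| = 1 by
          push_cast
          rw [show ((j:ℕ):ℝ) + 1/2 - (((j:ℕ):ℝ) + 1) = -(1/2) by ring, abs_neg,
            abs_of_nonneg (by norm_num : (0:ℝ) ≤ 1/2)]
          norm_num]
        exact projIcc_one'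
      have hpf1 : projIcc (0:ℝ) 1 zero_le_one (2 * |x - ((j:ℕ):ℝ)|) = 1 := by
        rw [heq]
        rw [show (2:ℝ) * |((j:ℕ):ℝ) + 1/2 - ((j:ℕ):ℝ)| = 1 by
          rw [show ((j:ℕ):ℝ) + 1/2 - ((j:ℕ):ℝ) = 1/2 by ring,
            abs_of_nonneg (by norm_num : (0:ℝ) ≤ 1/2)]
          norm_num]
        exact projIcc_one'
      rw [hidxj, hθx, hpf1, (hh _).apply_one, (hh j).apply_one]
  have hGcont : Continuous G := (locallyFinite_of_finite A).continuous hcover hclosed hcont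
  refine ⟨ContinuousMap.curry ⟨G, hGcont⟩, ?_⟩
  intro u j
  have hx : ((seqTime hr j : unitInterval) : ℝ) * N = ((j : ℕ) : ℝ) := by
    show ((j : ℕ) : ℝ) / ((r : ℝ) - 1) * N = _
    rw [← hNR]
    field_simp
  have hrx : round (((j:ℕ):ℝ)) = ((j:ℕ):ℤ) := round_natCast (j : ℕ)
  have hjN : (j : ℕ) ≤ N := by omega
  have hidxj : idx (((seqTime hr j : unitInterval) : ℝ) * N) = j := by
    apply Fin.ext
    rw [hx]
    simp [hidxdef, hrx, min_eq_left hjN]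
  have hθ0 : θ (((seqTime hr j : unitInterval) : ℝ) * N) = 0 := by
    show projIcc 0 1 zero_le_one (2 * |_ - (round _ : ℝ)|) = 0
    rw [hx, hrx]
    rw [show (2:ℝ) * |((j:ℕ):ℝ) - (((j:ℕ):ℤ) : ℝ)| = 0 by push_cast; simp]
    exact projIcc_zero'
  show G (u, seqTime hr j) = f (u.1 j)
  show (hh (idx (((seqTime hr j : unitInterval) : ℝ) * N)))
    (θ (((seqTime hr j : unitInterval) : ℝ) * N), u) = f (u.1 j)
  rw [hidxj, hθ0, (hh j).apply_zero]
  rfl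

/-- (1) → (2): a motion planner yields pairwise homotopies. -/
lemma homotopic_of_planner {X Y : Type*} [TopologicalSpace X] [TopologicalSpace Y] (f : C(X, Y))
    {r : ℕ} (hr : 2 ≤ r) (U : Set (Fin r → X))
    (hF : ∃ F : C(U, C(unitInterval, Y)),
      ∀ (u : U) (j : Fin r), F u (seqTime hr j) = f (u.1 j)) :
    ∀ j j' : Fin r, ContinuousMap.Homotopic (coordMap f U j) (coordMap f U j') := by
  obtain ⟨F, hF⟩ := hF
  intro j j'
  set a : ℝ := (seqTime hr j : ℝ) with hadef
  set b : ℝ := (seqTime hr j' : ℝ) with hbdef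
  have ha0 : 0 ≤ a := (seqTime hr j).2.1
  have ha1 : a ≤ 1 := (seqTime hr j).2.2
  have hb0 : 0 ≤ b := (seqTime hr j').2.1
  have hb1 : b ≤ 1 := (seqTime hr j').2.2
  have hmem : ∀ t : unitInterval, (1 - (t:ℝ)) * a + t * b ∈ unitInterval := by
    intro t
    have ht0 := t.2.1
    have ht1 := t.2.2
    constructor
    · nlinarith
    · nlinarith
  set c : unitInterval × U → unitInterval := fun q => ⟨(1 - (q.1:ℝ)) * a + q.1 * b, hmem q.1⟩
    with hcdef
  have hccont : Continuous c := by
    apply Continuous.subtype_mk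
    have h1 : Continuous fun q : unitInterval × U => (q.1 : ℝ) :=
      continuous_subtype_val.comp continuous_fst
    exact ((continuous_const.sub h1).mul continuous_const).add (h1.mul continuous_const)
  have hKcont : Continuous fun q : unitInterval × U => F q.2 (c q) := by
    have h1 : Continuous fun q : unitInterval × U => ((F q.2 : C(unitInterval, Y)), c q) :=
      (F.continuous.comp continuous_snd).prodMk hccont
    exact ContinuousEval.continuous_eval.comp h1
  refine ⟨{ toFun := fun q => F q.2 (c q), continuous_toFun := hKcont,
            map_zero_left := ?_, map_one_left := ?_ }⟩
  · intro u
    have hc0 : c (0, u) = seqTime hr j := by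
      apply Subtype.ext
      show (1 - ((0 : unitInterval) : ℝ)) * a + ((0 : unitInterval) : ℝ) * b = a
      norm_num
    show F u (c (0, u)) = coordMap f U j u
    rw [hc0, hF u j]; rfl
  · intro u
    have hc1 : c (1, u) = seqTime hr j' := by
      apply Subtype.ext
      show (1 - ((1 : unitInterval) : ℝ)) * a + ((1 : unitInterval) : ℝ) * b = b
      norm_num
    show F u (c (1, u)) = coordMap f U j' u
    rw [hc1, hF u j']; rfl


/-- **Statement 10.** For a continuous map `f : X → Y`, `r ≥ 2` and `U ⊆ X^r`, the
following are equivalent: (1) there is a sequential `f`-motion planner on `U`;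
(2) the `r` coordinate maps `x̄ ↦ f (x̄ j)` of `f^r` on `U` are pairwise homotopic;
(3) `f^r|_U` can be deformed into the diagonal `ΔY ⊆ Y^r`. -/
theorem stmt10 {X Y : Type*} [TopologicalSpace X] [TopologicalSpace Y] (f : C(X, Y))
    {r : ℕ} (hr : 2 ≤ r) (U : Set (Fin r → X)) :
    ((∃ F : C(U, C(unitInterval, Y)),
        ∀ (u : U) (j : Fin r), F u (seqTime hr j) = f (u.1 j)) ↔
      (∀ j j' : Fin r, ContinuousMap.Homotopic (coordMap f U j) (coordMap f U j'))) ∧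
    ((∀ j j' : Fin r, ContinuousMap.Homotopic (coordMap f U j) (coordMap f U j')) ↔
      (∃ H : C(U × unitInterval, Fin r → Y),
        (∀ u : U, H (u, 0) = fun j => f (u.1 j)) ∧
        (∀ u : U, ∃ y : Y, H (u, 1) = fun _ => y))) := by
  constructor
  · exact ⟨homotopic_of_planner f hr U, planner_of_homotopic f hr U⟩
  constructor
  · -- (2) → (3)
    intro h
    set j0 : Fin r := ⟨0, by omega⟩ with hj0def
    have hh : ∀ j : Fin r, ContinuousMap.Homotopy (coordMap f U j) (coordMap f U j0) :=
      fun j => (h j j0).some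
    have hcont : Continuous fun p : U × unitInterval => fun j : Fin r => hh j (p.2, p.1) := by
      apply continuous_pi
      intro j
      exact (hh j).continuous.comp ((continuous_snd.prodMk continuous_fst))
    refine ⟨⟨fun p => fun j => hh j (p.2, p.1), hcont⟩, ?_, ?_⟩
    · intro u
      funext j
      exact (hh j).apply_zero u
    · intro u
      refine ⟨f (u.1 j0), ?_⟩
      funext j
      exact (hh j).apply_one u
  · -- (3) → (2)
    rintro ⟨H, h0, h1⟩
    have hgc : Continuous fun u : U => H (u, 1) ⟨0, by omega⟩ :=
      (continuous_apply _).comp (H.continuous.comp (Continuous.prodMk_left _))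
    set g : C(U, Y) := ⟨fun u => H (u, 1) ⟨0, by omega⟩, hgc⟩ with hgdef
    have key : ∀ j : Fin r, ContinuousMap.Homotopic (coordMap f U j) g := by
      intro j
      have hKc : Continuous fun q : unitInterval × U => H (q.2, q.1) j :=
        (continuous_apply j).comp (H.continuous.comp (continuous_snd.prodMk continuous_fst))
      refine ⟨{ toFun := fun q => H (q.2, q.1) j, continuous_toFun := hKc,
                map_zero_left := ?_, map_one_left := ?_ }⟩
      · intro u
        show H (u, 0) j = coordMap f U j u
        rw [h0 u]
        rfl
      · intro u
        show H (u, 1) j = H (u, 1) ⟨0, by omega⟩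
        obtain ⟨y, hy⟩ := h1 u
        rw [hy]
    intro j j'
    exact (key j).trans (key j').symm
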